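/- Let Q be a generalised quadrangle of order (s, s^2), s > 1 odd, and let H be a hemisystem of points of Q. Then the incidence structure with point set H and lines the lines of Q restricted to H is a partial quadrangle PQ((s−1)/2, s^2, (s−1)^2/2). -/

import Mathlib

/-- Two points are collinear in a point-line geometry: distinct and on a common line. -/
def Collin {P L : Type*} (mem : P → L → Prop) (p q : P) : Prop :=
  p ≠ q ∧ ∃ l, mem p l ∧ mem q l

/-- A generalised quadrangle of order `(s, t)`. -/
def IsGQ {P L : Type*} (mem : P → L → Prop) (s t : ℕ) : Prop :=
  (∀ p q l l', p ≠ q → mem p l → mem q l → mem p l' → mem q l' → l = l') ∧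
  (∀ l, Nat.card {p | mem p l} = s + 1) ∧
  (∀ p, Nat.card {l | mem p l} = t + 1) ∧
  (∀ p l, ¬ mem p l → ∃! q, mem q l ∧ Collin mem p q)

/-- A partial quadrangle `PQ(s, t, μ)`. -/
def IsPQ {P L : Type*} (mem : P → L → Prop) (s t μ : ℕ) : Prop :=
  (∀ p q l l', p ≠ q → mem p l → mem q l → mem p l' → mem q l' → l = l') ∧
  (∀ p q r, Collin mem p q → Collin mem q r → Collin mem p r →
    ∃ l, mem p l ∧ mem q l ∧ mem r l) ∧
  (∀ l, Nat.card {p | mem p l} = s + 1) ∧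
  (∀ p, Nat.card {l | mem p l} = t + 1) ∧
  (∀ p q, p ≠ q → ¬ Collin mem p q →
    Nat.card {r | Collin mem r p ∧ Collin mem r q} = μ)

open Finset
open scoped Classical
set_option linter.unusedSectionVars false
set_option linter.unusedVariables false
set_option linter.unusedTactic false
set_option maxHeartbeats 1000000

namespace S9
variable {P L : Type*} [Fintype P] [Fintype L] {mem : P → L → Prop} {s : ℕ}

lemma collin_symm {p q : P} (h : Collin mem p q) : Collin mem q p :=
  ⟨h.1.symm, h.2.imp fun _ hl => ⟨hl.2, hl.1⟩⟩

lemma noTriangle (hax : ∀ p l, ¬ mem p l → ∃! q, mem q l ∧ Collin mem p q)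
    {a b z : P} {l : L} (ha : mem a l) (hb : mem b l) (hab : a ≠ b)
    (hza : Collin mem z a) (hzb : Collin mem z b) : mem z l := by
  by_contra h
  obtain ⟨w, _, hw⟩ := hax z l h
  exact hab ((hw a ⟨ha, hza⟩).trans (hw b ⟨hb, hzb⟩).symm)

lemma collin_of_mem {a b : P} {l : L} (ha : mem a l) (hb : mem b l) (hab : a ≠ b) :
    Collin mem a b := ⟨hab, l, ha, hb⟩

/-- Perp of a noncollinear pair has `s^2+1` points. -/
lemma perp_card (huniq : ∀ p q l l', p ≠ q → mem p l → mem q l → mem p l' → mem q l' → l = l')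
    (hpt : ∀ p, (univ.filter (mem p ·)).card = s ^ 2 + 1)
    (hax : ∀ p l, ¬ mem p l → ∃! q, mem q l ∧ Collin mem p q)
    {p q : P} (hne : p ≠ q) (hpq : ¬ Collin mem p q) :
    (univ.filter (fun r => Collin mem r p ∧ Collin mem r q)).card = s ^ 2 + 1 := by
  rw [← hpt p]
  apply Finset.card_bij (fun r hr => (Finset.mem_filter.mp hr).2.1.2.choose)
  · intro r hr
    have hspec := (Finset.mem_filter.mp hr).2.1.2.choose_spec
    simp only [Finset.mem_filter, Finset.mem_univ, true_and]
    exact hspec.2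
  · intro r hr r' hr' heq
    have hrq := (Finset.mem_filter.mp hr).2.2
    have hrq' := (Finset.mem_filter.mp hr').2.2
    have hs1 := (Finset.mem_filter.mp hr).2.1.2.choose_spec
    have hs2 := (Finset.mem_filter.mp hr').2.1.2.choose_spec
    rw [heq] at hs1
    have hqnl : ¬ mem q (Finset.mem_filter.mp hr').2.1.2.choose := fun hq =>
      hpq (collin_symm (collin_of_mem hq hs2.2 hne.symm))
    obtain ⟨w, -, hw⟩ := hax q _ hqnl
    exact (hw r ⟨hs1.1, collin_symm hrq⟩).trans (hw r' ⟨hs2.1, collin_symm hrq'⟩).symm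
  · intro l hl
    have hpl : mem p l := (Finset.mem_filter.mp hl).2
    have hqnl : ¬ mem q l := fun hq => hpq ⟨hne, l, hpl, hq⟩
    obtain ⟨r, ⟨hrl, hqr⟩, -⟩ := hax q l hqnl
    have hrp : r ≠ p := fun h => hpq (collin_symm (h ▸ hqr))
    have hmem : r ∈ univ.filter (fun r => Collin mem r p ∧ Collin mem r q) :=
      Finset.mem_filter.mpr ⟨Finset.mem_univ r, ⟨hrp, l, hrl, hpl⟩, collin_symm hqr⟩
    refine ⟨r, hmem, ?_⟩
    have hspec := (Finset.mem_filter.mp hmem).2.1.2.choose_spec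
    exact huniq r p _ l hrp hspec.1 hspec.2 hrl hpl

/-- Neighbours of `x` satisfying `φ` partition along lines through `x`. -/
lemma nbr_partition
    (huniq : ∀ p q l l', p ≠ q → mem p l → mem q l → mem p l' → mem q l' → l = l')
    (x : P) (φ : P → Prop) :
    (univ.filter (fun z => φ z ∧ Collin mem z x)).card
      = ∑ l ∈ univ.filter (mem x ·),
          (univ.filter (fun z => φ z ∧ mem z l ∧ z ≠ x)).card := by
  rw [← Finset.card_biUnion]
  · apply congrArg Finset.card
    ext z
    simp only [Finset.mem_filter, Finset.mem_univ, true_and, Finset.mem_biUnion]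
    simp only [Collin]
    constructor
    · rintro ⟨hφ, hzx, l, hzl, hxl⟩
      exact ⟨l, hxl, hφ, hzl, hzx⟩
    · rintro ⟨l, hxl, hφ, hzl, hzx⟩
      exact ⟨hφ, hzx, l, hzl, hxl⟩
  · intro l hl l' hl' hll'
    apply Finset.disjoint_left.mpr
    intro z hz hz'
    simp only [Finset.mem_coe, Finset.mem_filter, Finset.mem_univ, true_and] at hz hz' hl hl'
    exact hll' (huniq z x l l' hz.2.2 hz.2.1 hl hz'.2.1 hl')

/-- compute the per-line count with a point removed -/
lemma line_count_erase (x : P) (l : L) (hx : mem x l) (φ : P → Prop) {c : ℕ}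
    (hc : (univ.filter (fun z => φ z ∧ mem z l)).card = c) :
    (univ.filter (fun z => φ z ∧ mem z l ∧ z ≠ x)).card
      = c - (if φ x then 1 else 0) := by
  have : univ.filter (fun z => φ z ∧ mem z l ∧ z ≠ x)
      = (univ.filter (fun z => φ z ∧ mem z l)).erase x := by
    ext z; simp only [Finset.mem_erase, Finset.mem_filter, Finset.mem_univ, true_and]; tauto
  rw [this]
  by_cases hφ : φ x
  · rw [Finset.card_erase_of_mem (by simp [hφ, hx]), hc, if_pos hφ]
  · rw [Finset.erase_eq_of_notMem (by simp [hφ]), hc, if_neg hφ, Nat.sub_zero]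

/-- degree: neighbours of `x` satisfying `φ`, when every line meets `φ` in `c` points. -/
lemma nbr_card
    (huniq : ∀ p q l l', p ≠ q → mem p l → mem q l → mem p l' → mem q l' → l = l')
    (hpt : ∀ p, (univ.filter (mem p ·)).card = s ^ 2 + 1)
    (x : P) (φ : P → Prop) {c : ℕ}
    (hc : ∀ l, mem x l → (univ.filter (fun z => φ z ∧ mem z l)).card = c) :
    (univ.filter (fun z => φ z ∧ Collin mem z x)).card
      = (s ^ 2 + 1) * (c - if φ x then 1 else 0) := by
  rw [nbr_partition huniq x φ]
  rw [Finset.sum_congr rfl (fun l hl => line_count_erase x l (Finset.mem_filter.mp hl).2 φ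
      (hc l (Finset.mem_filter.mp hl).2))]
  rw [Finset.sum_const, hpt, smul_eq_mul]

/-- neighbours of `r` split into far points (from `p,q`) and the two lines `rp`, `rq`. -/
lemma far_split
    (huniq : ∀ p q l l', p ≠ q → mem p l → mem q l → mem p l' → mem q l' → l = l')
    (hax : ∀ p l, ¬ mem p l → ∃! q, mem q l ∧ Collin mem p q)
    {p q r : P} (hne : p ≠ q) (hpq : ¬ Collin mem p q)
    {l1 l2 : L} (hrl1 : mem r l1) (hpl1 : mem p l1) (hrl2 : mem r l2) (hql2 : mem q l2)
    (hrp : Collin mem r p) (hrq : Collin mem r q) (φ : P → Prop) :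
    (univ.filter (fun z => φ z ∧ Collin mem z r ∧
        z ≠ p ∧ z ≠ q ∧ ¬ Collin mem z p ∧ ¬ Collin mem z q)).card
      + ((univ.filter (fun z => φ z ∧ mem z l1 ∧ z ≠ r)).card
        + (univ.filter (fun z => φ z ∧ mem z l2 ∧ z ≠ r)).card)
      = (univ.filter (fun z => φ z ∧ Collin mem z r)).card := by
  have hl12 : l1 ≠ l2 := fun h => hpq ⟨hne, l2, h ▸ hpl1, hql2⟩
  -- membership characterization
  have key : ∀ z, Collin mem z r →
      ((z = p ∨ Collin mem z p ∨ z = q ∨ Collin mem z q) ↔ (mem z l1 ∨ mem z l2)) := by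
    intro z hzr
    constructor
    · rintro (rfl | hzp | rfl | hzq)
      · exact Or.inl hpl1
      · exact Or.inl (noTriangle hax hrl1 hpl1 hrp.1 hzr hzp)
      · exact Or.inr hql2
      · exact Or.inr (noTriangle hax hrl2 hql2 hrq.1 hzr hzq)
    · rintro (hz | hz)
      · rcases eq_or_ne z p with rfl | hne
        · exact Or.inl rfl
        · exact Or.inr (Or.inl (collin_of_mem hz hpl1 hne))
      · rcases eq_or_ne z q with rfl | hne
        · exact Or.inr (Or.inr (Or.inl rfl))
        · exact Or.inr (Or.inr (Or.inr (collin_of_mem hz hql2 hne)))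
  have e2 : (univ.filter (fun z => φ z ∧ mem z l1 ∧ z ≠ r)).card
        + (univ.filter (fun z => φ z ∧ mem z l2 ∧ z ≠ r)).card
      = (univ.filter (fun z => φ z ∧ (mem z l1 ∨ mem z l2) ∧ z ≠ r)).card := by
    rw [← Finset.card_union_of_disjoint]
    · congr 1; ext z
      simp only [Finset.mem_union, Finset.mem_filter, Finset.mem_univ, true_and]
      tauto
    · apply Finset.disjoint_left.mpr
      intro z hz hz'
      simp only [Finset.mem_filter, Finset.mem_univ, true_and] at hz hz'
      exact hl12 (huniq z r l1 l2 hz.2.2 hz.2.1 hrl1 hz'.2.1 hrl2)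
  rw [e2, ← Finset.card_union_of_disjoint]
  · congr 1; ext z
    simp only [Finset.mem_union, Finset.mem_filter, Finset.mem_univ, true_and]
    constructor
    · rintro (⟨hφ, hzr, -⟩ | ⟨hφ, hz, hzr⟩)
      · exact ⟨hφ, hzr⟩
      · refine ⟨hφ, ?_⟩
        rcases hz with hz | hz
        · exact collin_of_mem hz hrl1 hzr
        · exact collin_of_mem hz hrl2 hzr
    · rintro ⟨hφ, hzr⟩
      by_cases hbad : z = p ∨ Collin mem z p ∨ z = q ∨ Collin mem z q
      · exact Or.inr ⟨hφ, (key z hzr).mp hbad, hzr.1⟩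
      · push_neg at hbad
        exact Or.inl ⟨hφ, hzr, hbad.1, hbad.2.2.1, hbad.2.1, hbad.2.2.2⟩
  · apply Finset.disjoint_left.mpr
    intro z hz hz'
    simp only [Finset.mem_filter, Finset.mem_univ, true_and] at hz hz'
    have := (key z hz.2.1).mpr hz'.2.1
    tauto

lemma double_count (A : Finset P) (B : Finset P) (R : P → P → Prop) :
    ∑ z ∈ A, (B.filter (fun r => R z r)).card = ∑ r ∈ B, (A.filter (fun z => R z r)).card := by
  simp_rw [Finset.card_filter]
  exact Finset.sum_comm

lemma filter_ext (p q : P → Prop) (h : ∀ x, p x ↔ q x) :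
    univ.filter p = univ.filter q := by
  ext x; simp only [Finset.mem_filter, Finset.mem_univ, true_and]; exact h x

/-- split neighbours of `r` by the single line to `x` -/
lemma far_split1
    (huniq : ∀ p q l l', p ≠ q → mem p l → mem q l → mem p l' → mem q l' → l = l')
    (hax : ∀ p l, ¬ mem p l → ∃! q, mem q l ∧ Collin mem p q)
    {x r : P} {l1 : L} (hrl1 : mem r l1) (hxl1 : mem x l1)
    (hrx : Collin mem r x) (φ : P → Prop) :
    (univ.filter (fun z => φ z ∧ Collin mem z r ∧ z ≠ x ∧ ¬ Collin mem z x)).card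
      + (univ.filter (fun z => φ z ∧ mem z l1 ∧ z ≠ r)).card
      = (univ.filter (fun z => φ z ∧ Collin mem z r)).card := by
  rw [← Finset.card_union_of_disjoint]
  · congr 1; ext z
    simp only [Finset.mem_union, Finset.mem_filter, Finset.mem_univ, true_and]
    constructor
    · rintro (⟨hφ, hzr, -⟩ | ⟨hφ, hz, hzr⟩)
      · exact ⟨hφ, hzr⟩
      · exact ⟨hφ, collin_of_mem hz hrl1 hzr⟩
    · rintro ⟨hφ, hzr⟩
      by_cases hbad : z = x ∨ Collin mem z x
      · refine Or.inr ⟨hφ, ?_, hzr.1⟩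
        rcases hbad with rfl | hzx
        · exact hxl1
        · exact noTriangle hax hrl1 hxl1 hrx.1 hzr hzx
      · push_neg at hbad
        exact Or.inl ⟨hφ, hzr, hbad.1, hbad.2⟩
  · apply Finset.disjoint_left.mpr
    intro z hz hz'
    simp only [Finset.mem_filter, Finset.mem_univ, true_and] at hz hz'
    rcases eq_or_ne z x with rfl | hne
    · exact hz.2.2.1 rfl
    · exact hz.2.2.2 (collin_of_mem hz'.2.1 hxl1 hne)

/-- the perp of a noncollinear pair is a coclique -/
lemma perp_coclique
    (hax : ∀ p l, ¬ mem p l → ∃! q, mem q l ∧ Collin mem p q)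
    {p q r r' : P} (hne : p ≠ q) (hpq : ¬ Collin mem p q)
    (hrp : Collin mem r p) (hrq : Collin mem r q)
    (hr'p : Collin mem r' p) (hr'q : Collin mem r' q) (hrr' : r ≠ r') :
    ¬ Collin mem r r' := by
  rintro ⟨-, l, hrl, hr'l⟩
  have hpl : mem p l := noTriangle hax hrl hr'l hrr' (collin_symm hrp) (collin_symm hr'p)
  have hql : mem q l := noTriangle hax hrl hr'l hrr' (collin_symm hrq) (collin_symm hr'q)
  exact hpq ⟨hne, l, hpl, hql⟩

lemma pair_far_count
    (huniq : ∀ p q l l', p ≠ q → mem p l → mem q l → mem p l' → mem q l' → l = l')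
    (hpt : ∀ p, (univ.filter (mem p ·)).card = s ^ 2 + 1)
    (hax : ∀ p l, ¬ mem p l → ∃! q, mem q l ∧ Collin mem p q)
    {p q r r' : P} (hne : p ≠ q) (hpq : ¬ Collin mem p q)
    (hrp : Collin mem r p) (hrq : Collin mem r q)
    (hr'p : Collin mem r' p) (hr'q : Collin mem r' q) (hrr' : r ≠ r') :
    (univ.filter (fun z => (z ≠ p ∧ z ≠ q ∧ ¬ Collin mem z p ∧ ¬ Collin mem z q)
        ∧ Collin mem z r ∧ Collin mem z r')).card + 2 = s ^ 2 + 1 := by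
  have hcoc := perp_coclique hax hne hpq hrp hrq hr'p hr'q hrr'
  have hW := perp_card huniq hpt hax hrr' hcoc
  have key : ∀ z, Collin mem z r → Collin mem z r' →
      (z = p ∨ Collin mem z p) → z = p := by
    intro z hzr hzr' hbad
    rcases hbad with rfl | hzp
    · rfl
    obtain ⟨l, hrl, hpl⟩ := hrp.2
    obtain ⟨l', hr'l', hpl'⟩ := hr'p.2
    have hll' : l ≠ l' := fun h => hcoc ⟨hrr', l, hrl, h ▸ hr'l'⟩
    have hzl : mem z l := noTriangle hax hrl hpl hrp.1 hzr hzp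
    have hzl' : mem z l' := noTriangle hax hr'l' hpl' hr'p.1 hzr' hzp
    by_contra hzp'
    exact hll' (huniq z p l l' hzp' hzl hpl hzl' hpl')
  have keyq : ∀ z, Collin mem z r → Collin mem z r' →
      (z = q ∨ Collin mem z q) → z = q := by
    intro z hzr hzr' hbad
    rcases hbad with rfl | hzq
    · rfl
    obtain ⟨l, hrl, hql⟩ := hrq.2
    obtain ⟨l', hr'l', hql'⟩ := hr'q.2
    have hll' : l ≠ l' := fun h => hcoc ⟨hrr', l, hrl, h ▸ hr'l'⟩
    have hzl : mem z l := noTriangle hax hrl hql hrq.1 hzr hzq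
    have hzl' : mem z l' := noTriangle hax hr'l' hql' hr'q.1 hzr' hzq
    by_contra hzq'
    exact hll' (huniq z q l l' hzq' hzl hql hzl' hql')
  rw [← hW, ← Finset.card_pair hne, ← Finset.card_union_of_disjoint]
  · congr 1; ext z
    simp only [Finset.mem_union, Finset.mem_filter, Finset.mem_univ, true_and,
      Finset.mem_insert, Finset.mem_singleton]
    constructor
    · rintro (⟨-, hz⟩ | (rfl | rfl))
      · exact hz
      · exact ⟨collin_symm hrp, collin_symm hr'p⟩
      · exact ⟨collin_symm hrq, collin_symm hr'q⟩
    · rintro ⟨hzr, hzr'⟩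
      by_cases h1 : z = p ∨ Collin mem z p
      · exact Or.inr (Or.inl (key z hzr hzr' h1))
      by_cases h2 : z = q ∨ Collin mem z q
      · exact Or.inr (Or.inr (keyq z hzr hzr' h2))
      push_neg at h1 h2
      exact Or.inl ⟨⟨h1.1, h2.1, h1.2, h2.2⟩, hzr, hzr'⟩
  · apply Finset.disjoint_left.mpr
    rintro z hz hz'
    simp only [Finset.mem_filter, Finset.mem_univ, true_and] at hz
    simp only [Finset.mem_insert, Finset.mem_singleton] at hz'
    rcases hz' with rfl | rfl
    · exact hz.1.1 rfl
    · exact hz.1.2.1 rfl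

lemma deg_card
    (huniq : ∀ p q l l', p ≠ q → mem p l → mem q l → mem p l' → mem q l' → l = l')
    (hline : ∀ l, (univ.filter (mem · l)).card = s + 1)
    (hpt : ∀ p, (univ.filter (mem p ·)).card = s ^ 2 + 1)
    (x : P) :
    (univ.filter (fun z => Collin mem z x)).card = (s ^ 2 + 1) * s := by
  have h := nbr_card huniq hpt x (fun _ => True) (c := s + 1) (fun l hl => by
    convert hline l using 2
    ext z; simp)
  simp only [true_and, if_pos trivial] at h
  simpa using h

lemma point_count
    (huniq : ∀ p q l l', p ≠ q → mem p l → mem q l → mem p l' → mem q l' → l = l')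
    (hline : ∀ l, (univ.filter (mem · l)).card = s + 1)
    (hpt : ∀ p, (univ.filter (mem p ·)).card = s ^ 2 + 1)
    (hax : ∀ p l, ¬ mem p l → ∃! q, mem q l ∧ Collin mem p q)
    (x : P) :
    (univ : Finset P).card = 1 + (s ^ 2 + 1) * s + s ^ 4 := by
  classical
  set N := univ.filter (fun z => Collin mem z x) with hN
  set Far := univ.filter (fun z => z ≠ x ∧ ¬ Collin mem z x) with hFar
  have hdeg : N.card = (s ^ 2 + 1) * s := deg_card huniq hline hpt x
  have hfar : Far.card = s ^ 4 := by
    have hsum : ∑ z ∈ Far, (N.filter (fun r => Collin mem r z)).card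
        = ∑ r ∈ N, (Far.filter (fun z => Collin mem r z)).card :=
      double_count Far N (fun z r => Collin mem r z)
    have hL : ∑ z ∈ Far, (N.filter (fun r => Collin mem r z)).card
        = Far.card * (s ^ 2 + 1) := by
      rw [Finset.sum_congr rfl (fun z hz => ?_), Finset.sum_const, smul_eq_mul]
      simp only [hFar, Finset.mem_filter, Finset.mem_univ, true_and] at hz
      convert perp_card huniq hpt hax hz.1 hz.2 using 2
      ext a
      simp only [hN, Finset.mem_filter, Finset.mem_univ, true_and]
      tauto
    have hR : ∑ r ∈ N, (Far.filter (fun z => Collin mem r z)).card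
        = N.card * s ^ 3 := by
      rw [Finset.sum_congr rfl (fun r hr => ?_), Finset.sum_const, smul_eq_mul]
      simp only [hN, Finset.mem_filter, Finset.mem_univ, true_and] at hr
      obtain ⟨l1, hrl1, hxl1⟩ := hr.2
      have hfs := far_split1 huniq hax hrl1 hxl1 hr (fun _ => True)
      simp only [true_and] at hfs
      have hB : (univ.filter (fun z => mem z l1 ∧ z ≠ r)).card = s := by
        have h := line_count_erase r l1 hrl1 (fun _ => True) (c := s + 1) (by
          convert hline l1 using 2
          ext z; simp)
        simp only [true_and, if_pos trivial] at h
        simpa using h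
      have hdegr : (univ.filter (fun z => Collin mem z r)).card = (s ^ 2 + 1) * s :=
        deg_card huniq hline hpt r
      have hkey : (s ^ 2 + 1) * s = s ^ 3 + s := by ring
      have hfar' : (univ.filter (fun z => Collin mem z r ∧ z ≠ x ∧ ¬ Collin mem z x)).card
          = s ^ 3 := by omega
      convert hfar' using 2
      ext z
      simp only [hFar, Finset.mem_filter, Finset.mem_univ, true_and]
      constructor
      · rintro ⟨⟨i1, i2⟩, i3⟩; exact ⟨collin_symm i3, i1, i2⟩
      · rintro ⟨i3, i1, i2⟩; exact ⟨⟨i1, i2⟩, collin_symm i3⟩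
    have hx4 : Far.card * (s ^ 2 + 1) = s ^ 4 * (s ^ 2 + 1) := by
      rw [← hL, hsum, hR, hdeg]; ring
    exact Nat.eq_of_mul_eq_mul_right (by positivity) hx4
  have hpart : (insert x (N ∪ Far)) = (univ : Finset P) := by
    apply Finset.eq_univ_iff_forall.mpr
    intro z
    simp only [Finset.mem_insert, Finset.mem_union, hN, hFar, Finset.mem_filter,
      Finset.mem_univ, true_and]
    by_cases h1 : z = x
    · exact Or.inl h1
    by_cases h2 : Collin mem z x
    · exact Or.inr (Or.inl h2)
    · exact Or.inr (Or.inr ⟨h1, h2⟩)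
  rw [← hpart, Finset.card_insert_of_notMem, Finset.card_union_of_disjoint]
  · rw [hdeg, hfar]; ring
  · apply Finset.disjoint_left.mpr
    intro z hz hz'
    simp only [hN, hFar, Finset.mem_filter, Finset.mem_univ, true_and] at hz hz'
    exact hz'.2 hz
  · simp only [Finset.mem_union, hN, hFar, Finset.mem_filter, Finset.mem_univ, true_and]
    rintro (h | h)
    · exact h.1 rfl
    · exact h.1 rfl

lemma line_count
    (hline : ∀ l, (univ.filter (mem · l)).card = s + 1)
    (hpt : ∀ p, (univ.filter (mem p ·)).card = s ^ 2 + 1) :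
    (univ : Finset L).card * (s + 1) = (univ : Finset P).card * (s ^ 2 + 1) := by
  have h : ∑ l ∈ (univ : Finset L), (univ.filter (mem · l)).card
      = ∑ x ∈ (univ : Finset P), (univ.filter (mem x ·)).card := by
    simp_rw [Finset.card_filter]
    exact Finset.sum_comm
  rw [Finset.sum_congr rfl (fun l _ => hline l), Finset.sum_const, smul_eq_mul] at h
  rw [Finset.sum_congr rfl (fun x _ => hpt x), Finset.sum_const, smul_eq_mul] at h
  exact h

lemma hemi_count {H : Set P} {a : ℕ}
    (hpt : ∀ p, (univ.filter (mem p ·)).card = s ^ 2 + 1)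
    (hhemi : ∀ l, (univ.filter (fun p => p ∈ H ∧ mem p l)).card = a + 1) :
    (univ.filter (· ∈ H)).card * (s ^ 2 + 1) = (univ : Finset L).card * (a + 1) := by
  have h : ∑ l ∈ (univ : Finset L), (univ.filter (fun p => p ∈ H ∧ mem p l)).card
      = ∑ x ∈ univ.filter (· ∈ H), (univ.filter (mem x ·)).card := by
    simp_rw [Finset.card_filter]
    rw [Finset.sum_comm, Finset.sum_filter]
    apply Finset.sum_congr rfl
    intro x _
    by_cases hx : x ∈ H <;> simp [hx]
  rw [Finset.sum_congr rfl (fun l _ => hhemi l), Finset.sum_const, smul_eq_mul] at h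
  rw [Finset.sum_congr rfl (fun x _ => hpt x), Finset.sum_const, smul_eq_mul] at h
  omega

section ThreeReg
variable (huniq : ∀ p q l l', p ≠ q → mem p l → mem q l → mem p l' → mem q l' → l = l')
  (hline : ∀ l, (univ.filter (mem · l)).card = s + 1)
  (hpt : ∀ p, (univ.filter (mem p ·)).card = s ^ 2 + 1)
  (hax : ∀ p l, ¬ mem p l → ∃! q, mem q l ∧ Collin mem p q)

include huniq hline hpt hax in
lemma three_regular {p q : P} (hne : p ≠ q) (hpq : ¬ Collin mem p q)
    {z : P} (hzp : z ≠ p) (hzq : z ≠ q) (hzcp : ¬ Collin mem z p) (hzcq : ¬ Collin mem z q) :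
    (univ.filter (fun r => (Collin mem r p ∧ Collin mem r q) ∧ Collin mem z r)).card
      = s + 1 := by
  classical
  set T := univ.filter (fun r => Collin mem r p ∧ Collin mem r q) with hTdef
  set Z := univ.filter (fun w => w ≠ p ∧ w ≠ q ∧ ¬ Collin mem w p ∧ ¬ Collin mem w q) with hZdef
  set m : P → ℕ := fun w => (T.filter (fun r => Collin mem w r)).card with hmdef
  have hT : T.card = s ^ 2 + 1 := perp_card huniq hpt hax hne hpq
  -- each perp point sees (s^2+1)s - 2s points of Z
  have hcz : ∀ r ∈ T, (Z.filter (fun w => Collin mem w r)).card + 2 * s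
      = (s ^ 2 + 1) * s := by
    intro r hr
    simp only [hTdef, Finset.mem_filter, Finset.mem_univ, true_and] at hr
    obtain ⟨hrp, hrq⟩ := hr
    obtain ⟨l1, hrl1, hpl1⟩ := hrp.2
    obtain ⟨l2, hrl2, hql2⟩ := hrq.2
    have hfs := far_split huniq hax hne hpq hrl1 hpl1 hrl2 hql2 hrp hrq (fun _ => True)
    simp only [true_and] at hfs
    have hB1 : (univ.filter (fun w => mem w l1 ∧ w ≠ r)).card = s := by
      have h := line_count_erase r l1 hrl1 (fun _ => True) (c := s + 1) (by
        convert hline l1 using 2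
        ext w; simp)
      simp only [true_and, if_pos trivial] at h
      simpa using h
    have hB2 : (univ.filter (fun w => mem w l2 ∧ w ≠ r)).card = s := by
      have h := line_count_erase r l2 hrl2 (fun _ => True) (c := s + 1) (by
        convert hline l2 using 2
        ext w; simp)
      simp only [true_and, if_pos trivial] at h
      simpa using h
    have hdegr : (univ.filter (fun w => Collin mem w r)).card = (s ^ 2 + 1) * s :=
      deg_card huniq hline hpt r
    have hgoal : (Z.filter (fun w => Collin mem w r)).card
        = (univ.filter (fun w => Collin mem w r ∧ w ≠ p ∧ w ≠ q ∧
            ¬ Collin mem w p ∧ ¬ Collin mem w q)).card := by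
      congr 1
      ext w
      simp only [hZdef, Finset.mem_filter, Finset.mem_univ, true_and]
      tauto
    rw [hgoal]
    omega
  -- double count of edges between Z and T
  have hsum1 : ∑ w ∈ Z, m w = ∑ r ∈ T, (Z.filter (fun w => Collin mem w r)).card :=
    double_count Z T (fun w r => Collin mem w r)
  -- common neighbours in Z of two distinct perp points
  have he : ∀ r ∈ T, ∀ r' ∈ T, r ≠ r' →
      (Z.filter (fun w => Collin mem w r ∧ Collin mem w r')).card + 2 = s ^ 2 + 1 := by
    intro r hr r' hr' hrr'
    simp only [hTdef, Finset.mem_filter, Finset.mem_univ, true_and] at hr hr'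
    have h := pair_far_count huniq hpt hax hne hpq hr.1 hr.2 hr'.1 hr'.2 hrr'
    have hgoal : (Z.filter (fun w => Collin mem w r ∧ Collin mem w r')).card
        = (univ.filter (fun w => (w ≠ p ∧ w ≠ q ∧ ¬ Collin mem w p ∧ ¬ Collin mem w q)
            ∧ Collin mem w r ∧ Collin mem w r')).card := by
      congr 1
      ext w
      simp only [hZdef, Finset.mem_filter, Finset.mem_univ, true_and]
      try tauto
    rw [hgoal]
    exact h
  -- sum of squares
  have hms : ∀ w, (m w : ℤ) = ∑ r ∈ T, if Collin mem w r then (1 : ℤ) else 0 := by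
    intro w
    rw [hmdef]
    simp only [Finset.card_filter]
    push_cast
    rfl
  have hsq : ∑ w ∈ Z, (m w : ℤ) ^ 2
      = ∑ r ∈ T, ∑ r' ∈ T, ((Z.filter (fun w => Collin mem w r ∧ Collin mem w r')).card : ℤ) := by
    have step1 : ∀ w, (m w : ℤ) ^ 2 = ∑ r ∈ T, ∑ r' ∈ T,
        ((if Collin mem w r then (1 : ℤ) else 0) * (if Collin mem w r' then (1 : ℤ) else 0)) := by
      intro w
      rw [pow_two, hms, Finset.sum_mul_sum]
    rw [Finset.sum_congr rfl (fun w _ => step1 w)]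
    rw [Finset.sum_comm]
    apply Finset.sum_congr rfl
    intro r _
    rw [Finset.sum_comm]
    apply Finset.sum_congr rfl
    intro r' _
    rw [Finset.card_filter]
    push_cast
    apply Finset.sum_congr rfl
    intro w _
    by_cases h1 : Collin mem w r <;> by_cases h2 : Collin mem w r' <;> simp [h1, h2]
  -- Z cardinality
  have hZcard : Z.card + 2 + (2 * ((s ^ 2 + 1) * s)) = (univ : Finset P).card + (s ^ 2 + 1) := by
    set NP := univ.filter (fun w => Collin mem w p) with hNP
    set NQ := univ.filter (fun w => Collin mem w q) with hNQ
    have hNPc : NP.card = (s ^ 2 + 1) * s := deg_card huniq hline hpt p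
    have hNQc : NQ.card = (s ^ 2 + 1) * s := deg_card huniq hline hpt q
    have hinter : NP ∩ NQ = T := by
      ext w
      simp only [hNP, hNQ, hTdef, Finset.mem_inter, Finset.mem_filter, Finset.mem_univ, true_and]
    have hcui : (NP ∪ NQ).card + (NP ∩ NQ).card = NP.card + NQ.card :=
      Finset.card_union_add_card_inter NP NQ
    have hpart : insert p (insert q ((NP ∪ NQ) ∪ Z)) = (univ : Finset P) := by
      apply Finset.eq_univ_iff_forall.mpr
      intro w
      simp only [Finset.mem_insert, Finset.mem_union, hNP, hNQ, hZdef,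
        Finset.mem_filter, Finset.mem_univ, true_and]
      by_cases h1 : w = p
      · exact Or.inl h1
      by_cases h2 : w = q
      · exact Or.inr (Or.inl h2)
      by_cases h3 : Collin mem w p
      · exact Or.inr (Or.inr (Or.inl (Or.inl h3)))
      by_cases h4 : Collin mem w q
      · exact Or.inr (Or.inr (Or.inl (Or.inr h4)))
      · exact Or.inr (Or.inr (Or.inr ⟨h1, h2, h3, h4⟩))
    have hdisj1 : Disjoint (NP ∪ NQ) Z := by
      apply Finset.disjoint_left.mpr
      intro w hw hw'
      simp only [Finset.mem_union, hNP, hNQ, Finset.mem_filter, Finset.mem_univ, true_and] at hw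
      simp only [hZdef, Finset.mem_filter, Finset.mem_univ, true_and] at hw'
      rcases hw with h | h
      · exact hw'.2.2.1 h
      · exact hw'.2.2.2 h
    have hqn : q ∉ (NP ∪ NQ) ∪ Z := by
      simp only [Finset.mem_union, hNP, hNQ, hZdef, Finset.mem_filter, Finset.mem_univ, true_and]
      push_neg
      exact ⟨⟨fun h => hpq (collin_symm h), fun h => h.1 rfl⟩, fun _ h => absurd rfl h⟩
    have hpn : p ∉ insert q ((NP ∪ NQ) ∪ Z) := by
      simp only [Finset.mem_insert, Finset.mem_union, hNP, hNQ, hZdef,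
        Finset.mem_filter, Finset.mem_univ, true_and]
      push_neg
      exact ⟨hne, ⟨fun h => h.1 rfl, fun h => hpq h⟩, fun h => absurd rfl h⟩
    have hu := Finset.card_union_of_disjoint hdisj1
    rw [hinter, hT] at hcui
    rw [← hpart, Finset.card_insert_of_notMem hpn, Finset.card_insert_of_notMem hqn, hu]
    omega
  -- variance is zero
  have hSm : ∑ w ∈ Z, (m w : ℤ) = ((s : ℤ) ^ 2 + 1) * (((s : ℤ) ^ 2 + 1) * s - 2 * s) := by
    have h1 : ∀ r ∈ T, ((Z.filter (fun w => Collin mem w r)).card : ℤ)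
        = ((s : ℤ) ^ 2 + 1) * s - 2 * s := by
      intro r hr
      have h2 : (((Z.filter (fun w => Collin mem w r)).card : ℤ)) + 2 * s
          = ((s : ℤ) ^ 2 + 1) * s := by exact_mod_cast hcz r hr
      linarith
    calc ∑ w ∈ Z, (m w : ℤ) = ∑ r ∈ T, ((Z.filter (fun w => Collin mem w r)).card : ℤ) := by
          exact_mod_cast hsum1
      _ = T.card * (((s : ℤ) ^ 2 + 1) * s - 2 * s) := by
          rw [Finset.sum_congr rfl h1, Finset.sum_const, nsmul_eq_mul]
      _ = _ := by rw [hT]; push_cast; ring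
  have hSm2 : ∑ w ∈ Z, (m w : ℤ) ^ 2
      = ((s : ℤ) ^ 2 + 1) * (((s : ℤ) ^ 2 + 1) * s - 2 * s)
        + ((s : ℤ) ^ 2 + 1) * (s : ℤ) ^ 2 * ((s : ℤ) ^ 2 - 1) := by
    rw [hsq]
    have hdiag : ∀ r ∈ T, ∑ r' ∈ T,
        ((Z.filter (fun w => Collin mem w r ∧ Collin mem w r')).card : ℤ)
        = (((s : ℤ) ^ 2 + 1) * s - 2 * s) + (s : ℤ) ^ 2 * ((s : ℤ) ^ 2 - 1) := by
      intro r hr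
      rw [← Finset.add_sum_erase T _ hr]
      have hE1 : ((Z.filter (fun w => Collin mem w r ∧ Collin mem w r)).card : ℤ)
          = ((s : ℤ) ^ 2 + 1) * s - 2 * s := by
        have e : Z.filter (fun w => Collin mem w r ∧ Collin mem w r)
            = Z.filter (fun w => Collin mem w r) := by
          congr 1; ext w; tauto
        rw [e]
        have h2 : (((Z.filter (fun w => Collin mem w r)).card : ℤ)) + 2 * s
            = ((s : ℤ) ^ 2 + 1) * s := by exact_mod_cast hcz r hr
        linarith
      have hE2 : ∀ r' ∈ T.erase r,
          ((Z.filter (fun w => Collin mem w r ∧ Collin mem w r')).card : ℤ)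
          = (s : ℤ) ^ 2 - 1 := by
        intro r' hr'
        have hr'T := Finset.mem_of_mem_erase hr'
        have hner : r ≠ r' := (Finset.ne_of_mem_erase hr').symm
        have h2 : (((Z.filter (fun w => Collin mem w r ∧ Collin mem w r')).card : ℤ)) + 2
            = (s : ℤ) ^ 2 + 1 := by exact_mod_cast he r hr r' hr'T hner
        linarith
      rw [hE1, Finset.sum_congr rfl hE2, Finset.sum_const, nsmul_eq_mul,
        Finset.card_erase_of_mem hr, hT]
      push_cast
      ring
    rw [Finset.sum_congr rfl hdiag, Finset.sum_const, nsmul_eq_mul, hT]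
    push_cast
    ring
  have hv := point_count huniq hline hpt hax p
  have hZc : (Z.card : ℤ) = 1 + ((s : ℤ) ^ 2 + 1) * s + (s : ℤ) ^ 4 + ((s : ℤ) ^ 2 + 1)
      - 2 - 2 * (((s : ℤ) ^ 2 + 1) * s) := by
    have h := hZcard
    rw [hv] at h
    have h' : ((Z.card : ℤ)) + 2 + 2 * (((s : ℤ) ^ 2 + 1) * s)
        = 1 + ((s : ℤ) ^ 2 + 1) * s + (s : ℤ) ^ 4 + ((s : ℤ) ^ 2 + 1) := by exact_mod_cast h
    linarith
  have hvar : ∑ w ∈ Z, ((m w : ℤ) - ((s : ℤ) + 1)) ^ 2 = 0 := by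
    have e1 : ∑ w ∈ Z, ((m w : ℤ) - ((s : ℤ) + 1)) ^ 2
        = (∑ w ∈ Z, (m w : ℤ) ^ 2) - 2 * ((s : ℤ) + 1) * (∑ w ∈ Z, (m w : ℤ))
          + ((s : ℤ) + 1) ^ 2 * Z.card := by
      have : ∀ w ∈ Z, ((m w : ℤ) - ((s : ℤ) + 1)) ^ 2
          = (m w : ℤ) ^ 2 - 2 * ((s : ℤ) + 1) * (m w : ℤ) + ((s : ℤ) + 1) ^ 2 :=
        fun w _ => by ring
      rw [Finset.sum_congr rfl this, Finset.sum_add_distrib, Finset.sum_sub_distrib,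
        ← Finset.mul_sum, Finset.sum_const, nsmul_eq_mul]
      ring
    rw [e1, hSm, hSm2, hZc]
    ring
  -- conclude
  have hzZ : z ∈ Z := by
    simp only [hZdef, Finset.mem_filter, Finset.mem_univ, true_and]
    exact ⟨hzp, hzq, hzcp, hzcq⟩
  have hz0 : ((m z : ℤ) - ((s : ℤ) + 1)) ^ 2 = 0 := by
    have hnn : ∀ w ∈ Z, 0 ≤ ((m w : ℤ) - ((s : ℤ) + 1)) ^ 2 := fun w _ => sq_nonneg _
    exact (Finset.sum_eq_zero_iff_of_nonneg hnn).mp hvar z hzZ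
  have : (m z : ℤ) = (s : ℤ) + 1 := by
    have := pow_eq_zero_iff (n := 2) (by norm_num) |>.mp hz0
    linarith
  have hmz : m z = s + 1 := by exact_mod_cast this
  rw [← hmz, hmdef]
  simp only [hTdef, Finset.filter_filter]
include huniq hline hpt hax in
lemma hemi_mu {H : Set P} {a : ℕ}
    (hhemi : ∀ l, (univ.filter (fun w => w ∈ H ∧ mem w l)).card = a + 1)
    {p q : P} (hp : p ∈ H) (hq : q ∈ H) (hne : p ≠ q) (hpq : ¬ Collin mem p q)
    (hsa : s = 2 * a + 1) :
    (univ.filter (fun r => r ∈ H ∧ Collin mem r p ∧ Collin mem r q)).card = 2 * a ^ 2 := by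
  classical
  set T := univ.filter (fun r => Collin mem r p ∧ Collin mem r q) with hTdef
  set ZH := univ.filter (fun w => w ∈ H ∧ w ≠ p ∧ w ≠ q ∧
    ¬ Collin mem w p ∧ ¬ Collin mem w q) with hZHdef
  set Hf := univ.filter (· ∈ H) with hHfdef
  set TH := univ.filter (fun r => r ∈ H ∧ Collin mem r p ∧ Collin mem r q) with hTHdef
  have hT : T.card = s ^ 2 + 1 := perp_card huniq hpt hax hne hpq
  -- size of the hemisystem
  have hHfc : Hf.card = (s ^ 3 + 1) * (a + 1) := by
    have hv := point_count huniq hline hpt hax p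
    have hlc := line_count hline hpt
    have hhc := hemi_count hpt hhemi
    have hmul : Hf.card * ((s ^ 2 + 1) * (s + 1))
        = ((s ^ 3 + 1) * (a + 1)) * ((s ^ 2 + 1) * (s + 1)) := by
      calc Hf.card * ((s ^ 2 + 1) * (s + 1)) = (Hf.card * (s ^ 2 + 1)) * (s + 1) := by ring
        _ = ((univ : Finset L).card * (s + 1)) * (a + 1) := by rw [hhc]; ring
        _ = ((univ : Finset P).card * (s ^ 2 + 1)) * (a + 1) := by rw [hlc]
        _ = _ := by rw [hv]; ring
    exact Nat.eq_of_mul_eq_mul_right (by positivity) hmul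
  -- every point of ZH sees s+1 points of T
  have hmZH : ∀ w ∈ ZH, (T.filter (fun r => Collin mem w r)).card = s + 1 := by
    intro w hw
    simp only [hZHdef, Finset.mem_filter, Finset.mem_univ, true_and] at hw
    have h3 := three_regular huniq hline hpt hax hne hpq hw.2.1 hw.2.2.1 hw.2.2.2.1 hw.2.2.2.2
    simp only [hTdef, Finset.filter_filter]
    exact h3
  -- double counting
  have hdc : ∑ w ∈ ZH, (T.filter (fun r => Collin mem w r)).card
      = ∑ r ∈ T, (ZH.filter (fun w => Collin mem w r)).card :=
    double_count ZH T (fun w r => Collin mem w r)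
  have hdcL : ∑ w ∈ ZH, (T.filter (fun r => Collin mem w r)).card = ZH.card * (s + 1) := by
    rw [Finset.sum_congr rfl hmZH, Finset.sum_const, smul_eq_mul]
  -- per perp point count
  have hcH : ∀ r ∈ T, ((ZH.filter (fun w => Collin mem w r)).card : ℤ)
      = ((s : ℤ) ^ 2 - 1) * (((a : ℤ) + 1) - if r ∈ H then 1 else 0) := by
    intro r hr
    simp only [hTdef, Finset.mem_filter, Finset.mem_univ, true_and] at hr
    obtain ⟨hrp, hrq⟩ := hr
    obtain ⟨l1, hrl1, hpl1⟩ := hrp.2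
    obtain ⟨l2, hrl2, hql2⟩ := hrq.2
    have hfs := far_split huniq hax hne hpq hrl1 hpl1 hrl2 hql2 hrp hrq (· ∈ H)
    have hB1 := line_count_erase r l1 hrl1 (· ∈ H) (c := a + 1) (hhemi l1)
    have hB2 := line_count_erase r l2 hrl2 (· ∈ H) (c := a + 1) (hhemi l2)
    have hdegH := nbr_card huniq hpt r (· ∈ H) (c := a + 1) (fun l _ => hhemi l)
    rw [hB1, hB2, hdegH] at hfs
    have hglue : (ZH.filter (fun w => Collin mem w r)).card
        = (univ.filter (fun w => w ∈ H ∧ Collin mem w r ∧ w ≠ p ∧ w ≠ q ∧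
            ¬ Collin mem w p ∧ ¬ Collin mem w q)).card := by
      congr 1
      ext w
      simp only [hZHdef, Finset.mem_filter, Finset.mem_univ, true_and]
      tauto
    rw [hglue]
    by_cases hrH : r ∈ H
    · simp only [if_pos hrH] at hfs ⊢
      have h2 : ((univ.filter (fun w => w ∈ H ∧ Collin mem w r ∧ w ≠ p ∧ w ≠ q ∧
          ¬ Collin mem w p ∧ ¬ Collin mem w q)).card : ℤ) + ((a : ℤ) + (a : ℤ))
          = ((s : ℤ) ^ 2 + 1) * a := by
        have ha1 : a + 1 - 1 = a := by omega
        rw [ha1] at hfs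
        exact_mod_cast hfs
      push_cast
      linarith
    · simp only [if_neg hrH] at hfs ⊢
      have h2 : ((univ.filter (fun w => w ∈ H ∧ Collin mem w r ∧ w ≠ p ∧ w ≠ q ∧
          ¬ Collin mem w p ∧ ¬ Collin mem w q)).card : ℤ)
          + (((a : ℤ) + 1) + ((a : ℤ) + 1)) = ((s : ℤ) ^ 2 + 1) * ((a : ℤ) + 1) := by
        have ha1 : a + 1 - 0 = a + 1 := by omega
        rw [ha1] at hfs
        exact_mod_cast hfs
      push_cast
      linarith
  -- chi sum
  have hchi : ∑ r ∈ T, (if r ∈ H then (1 : ℤ) else 0) = (TH.card : ℤ) := by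
    have : TH = T.filter (· ∈ H) := by
      rw [hTdef, Finset.filter_filter, hTHdef]
      congr 1
      ext r
      tauto
    rw [this, Finset.card_filter]
    push_cast
    rfl
  have hdcR : (∑ r ∈ T, ((ZH.filter (fun w => Collin mem w r)).card : ℤ))
      = ((s : ℤ) ^ 2 - 1) * (((s : ℤ) ^ 2 + 1) * ((a : ℤ) + 1) - TH.card) := by
    rw [Finset.sum_congr rfl hcH, ← Finset.mul_sum, Finset.sum_sub_distrib,
      Finset.sum_const, nsmul_eq_mul, hchi, hT]
    push_cast
    ring
  -- partition of H points
  have hXcard : Hf.card + TH.card = ZH.card + 2 + ((s ^ 2 + 1) * a + (s ^ 2 + 1) * a) := by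
    set NHp := univ.filter (fun w => w ∈ H ∧ Collin mem w p) with hNHp
    set NHq := univ.filter (fun w => w ∈ H ∧ Collin mem w q) with hNHq
    have hNPc : NHp.card = (s ^ 2 + 1) * a := by
      have h := nbr_card huniq hpt p (· ∈ H) (c := a + 1) (fun l _ => hhemi l)
      rw [if_pos hp] at h
      have ha1 : a + 1 - 1 = a := by omega
      rw [ha1] at h
      exact h
    have hNQc : NHq.card = (s ^ 2 + 1) * a := by
      have h := nbr_card huniq hpt q (· ∈ H) (c := a + 1) (fun l _ => hhemi l)
      rw [if_pos hq] at h
      have ha1 : a + 1 - 1 = a := by omega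
      rw [ha1] at h
      exact h
    have hinter : NHp ∩ NHq = TH := by
      ext w
      simp only [hNHp, hNHq, hTHdef, Finset.mem_inter, Finset.mem_filter,
        Finset.mem_univ, true_and]
      tauto
    have hcui := Finset.card_union_add_card_inter NHp NHq
    rw [hinter] at hcui
    have hpart : insert p (insert q ((NHp ∪ NHq) ∪ ZH)) = Hf := by
      ext w
      simp only [Finset.mem_insert, Finset.mem_union, hNHp, hNHq, hZHdef, hHfdef,
        Finset.mem_filter, Finset.mem_univ, true_and]
      constructor
      · rintro (rfl | rfl | (⟨h1, -⟩ | ⟨h1, -⟩) | ⟨h1, -⟩) <;> first | exact hp | exact hq | exact h1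
      · intro hw
        by_cases h1 : w = p
        · exact Or.inl h1
        by_cases h2 : w = q
        · exact Or.inr (Or.inl h2)
        by_cases h3 : Collin mem w p
        · exact Or.inr (Or.inr (Or.inl (Or.inl ⟨hw, h3⟩)))
        by_cases h4 : Collin mem w q
        · exact Or.inr (Or.inr (Or.inl (Or.inr ⟨hw, h4⟩)))
        · exact Or.inr (Or.inr (Or.inr ⟨hw, h1, h2, h3, h4⟩))
    have hdisj1 : Disjoint (NHp ∪ NHq) ZH := by
      apply Finset.disjoint_left.mpr
      intro w hw hw'
      simp only [Finset.mem_union, hNHp, hNHq, Finset.mem_filter, Finset.mem_univ,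
        true_and] at hw
      simp only [hZHdef, Finset.mem_filter, Finset.mem_univ, true_and] at hw'
      rcases hw with h | h
      · exact hw'.2.2.2.1 h.2
      · exact hw'.2.2.2.2 h.2
    have hqn : q ∉ (NHp ∪ NHq) ∪ ZH := by
      simp only [Finset.mem_union, hNHp, hNHq, hZHdef, Finset.mem_filter,
        Finset.mem_univ, true_and]
      push_neg
      refine ⟨⟨fun _ h => hpq (collin_symm h), fun _ h => h.1 rfl⟩, fun _ _ h => absurd rfl h⟩
    have hpn : p ∉ insert q ((NHp ∪ NHq) ∪ ZH) := by
      simp only [Finset.mem_insert, Finset.mem_union, hNHp, hNHq, hZHdef,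
        Finset.mem_filter, Finset.mem_univ, true_and]
      push_neg
      refine ⟨hne, ⟨fun _ h => h.1 rfl, fun _ h => hpq h⟩, fun _ h => absurd rfl h⟩
    have hu := Finset.card_union_of_disjoint hdisj1
    rw [← hpart, Finset.card_insert_of_notMem hpn, Finset.card_insert_of_notMem hqn, hu]
    omega
  -- assemble the linear equation over ℤ
  have E1 : ((ZH.card : ℤ)) * ((s : ℤ) + 1)
      = ((s : ℤ) ^ 2 - 1) * (((s : ℤ) ^ 2 + 1) * ((a : ℤ) + 1) - TH.card) := by
    have h0 : ((∑ r ∈ T, (ZH.filter (fun w => Collin mem w r)).card : ℕ) : ℤ)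
        = ∑ r ∈ T, ((ZH.filter (fun w => Collin mem w r)).card : ℤ) := by
      push_cast; rfl
    rw [← hdcR, ← h0, ← hdc, hdcL]
    push_cast; ring
  have E2 : ((Hf.card : ℤ)) + (TH.card : ℤ)
      = (ZH.card : ℤ) + 2 + (((s : ℤ) ^ 2 + 1) * a + ((s : ℤ) ^ 2 + 1) * a) := by
    exact_mod_cast hXcard
  have E3 : ((Hf.card : ℤ)) = ((s : ℤ) ^ 3 + 1) * ((a : ℤ) + 1) := by
    exact_mod_cast hHfc
  subst hsa
  push_cast at E1 E2 E3
  have hc : ((2 * (a : ℤ) + 1) * (2 * (a : ℤ) + 2)) * ((TH.card : ℤ) - 2 * (a : ℤ) ^ 2) = 0 := by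
    linear_combination E1 + (2 * (a : ℤ) + 2) * E2 - (2 * (a : ℤ) + 2) * E3
  have hnz : ((2 * (a : ℤ) + 1) * (2 * (a : ℤ) + 2)) ≠ 0 := by positivity
  have hz : (TH.card : ℤ) - 2 * (a : ℤ) ^ 2 = 0 := by
    rcases mul_eq_zero.mp hc with h | h
    · exact absurd h hnz
    · exact h
  have : (TH.card : ℤ) = 2 * (a : ℤ) ^ 2 := by linarith
  exact_mod_cast this

end ThreeReg

lemma natcard_eq {α : Type*} [Fintype α] (pred : α → Prop) :
    Nat.card {x | pred x} = (univ.filter pred).card := by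
  rw [Nat.card_eq_card_toFinset, Set.toFinset_setOf]


end S9


theorem stmt_9 {P L : Type*} [Fintype P] [Fintype L] (s : ℕ) (hs : 1 < s)
    (hodd : Odd s) (mem : P → L → Prop) (hgq : IsGQ mem s (s ^ 2))
    (H : Set P)
    -- `H` is a hemisystem of points: every line contains exactly `(s+1)/2` points of `H`
    (hhemi : ∀ l : L, Nat.card {p : P | p ∈ H ∧ mem p l} = (s + 1) / 2) :
    IsPQ (fun (p : H) (l : L) => mem p.1 l) ((s - 1) / 2) (s ^ 2) ((s - 1) ^ 2 / 2) := by
  obtain ⟨a, hsa⟩ : ∃ a, s = 2 * a + 1 := by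
    obtain ⟨k, hk⟩ := hodd; exact ⟨k, by omega⟩
  obtain ⟨huniq, hlineN, hptN, hax⟩ := hgq
  have hline : ∀ l, (univ.filter (fun p => mem p l)).card = s + 1 := fun l => by
    have h0 := hlineN l
    rw [S9.natcard_eq] at h0
    convert h0 using 2
  have hpt : ∀ p, (univ.filter (fun l => mem p l)).card = s ^ 2 + 1 := fun p => by
    have h0 := hptN p
    rw [S9.natcard_eq] at h0
    convert h0 using 2
  have hhemi' : ∀ l, (univ.filter (fun w => w ∈ H ∧ mem w l)).card = a + 1 := fun l => by
    have h0 := hhemi l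
    rw [S9.natcard_eq] at h0
    have h1 : (univ.filter (fun w => w ∈ H ∧ mem w l)).card = (s + 1) / 2 := by
      convert h0 using 2
      ext w
      simp
    omega
  have hcol : ∀ (u v : H), Collin (fun (p : H) l => mem p.1 l) u v ↔ Collin mem u.1 v.1 := by
    intro u v
    constructor
    · rintro ⟨h1, l, h2, h3⟩
      exact ⟨fun h => h1 (Subtype.ext h), l, h2, h3⟩
    · rintro ⟨h1, l, h2, h3⟩
      exact ⟨fun h => h1 (congrArg Subtype.val h), l, h2, h3⟩
  refine ⟨?_, ?_, ?_, ?_, ?_⟩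
  · intro p q l l' hpq h1 h2 h3 h4
    exact huniq p.1 q.1 l l' (fun h => hpq (Subtype.ext h)) h1 h2 h3 h4
  · intro p q r hpq hqr hpr
    obtain ⟨h1, l, hpl, hql⟩ := hpq
    refine ⟨l, hpl, hql, ?_⟩
    have hne : p.1 ≠ q.1 := fun h => h1 (Subtype.ext h)
    exact S9.noTriangle hax hpl hql hne
      (S9.collin_symm ((hcol p r).mp hpr)) (S9.collin_symm ((hcol q r).mp hqr))
  · intro l
    have e : {pt : H | mem pt.1 l} ≃ {x : P | x ∈ H ∧ mem x l} :=
      ⟨fun x => ⟨x.1.1, x.1.2, x.2⟩, fun x => ⟨⟨x.1, x.2.1⟩, x.2.2⟩,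
        fun x => rfl, fun x => rfl⟩
    rw [Nat.card_congr e]
    have := hhemi l
    omega
  · intro p
    exact hptN p.1
  · intro p q hpq hcpq
    have hne : p.1 ≠ q.1 := fun h => hpq (Subtype.ext h)
    have hpq' : ¬ Collin mem p.1 q.1 := fun h => hcpq ((hcol p q).mpr h)
    have e : {r : H | Collin (fun (p : H) l => mem p.1 l) r p
          ∧ Collin (fun (p : H) l => mem p.1 l) r q}
        ≃ {x : P | x ∈ H ∧ Collin mem x p.1 ∧ Collin mem x q.1} := by
      refine ⟨fun x => ⟨x.1.1, x.1.2, (hcol x.1 p).mp x.2.1, (hcol x.1 q).mp x.2.2⟩,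
        fun x => ⟨⟨x.1, x.2.1⟩, (hcol ⟨x.1, x.2.1⟩ p).mpr x.2.2.1,
          (hcol ⟨x.1, x.2.1⟩ q).mpr x.2.2.2⟩, fun x => rfl, fun x => rfl⟩
    rw [Nat.card_congr e, S9.natcard_eq]
    have hmu := S9.hemi_mu huniq hline hpt hax hhemi' p.2 q.2 hne hpq' hsa
    have h1 : s - 1 = 2 * a := by omega
    have h2 : (s - 1) ^ 2 / 2 = 2 * a ^ 2 := by
      rw [h1]
      have : (2 * a) ^ 2 = 2 * a ^ 2 * 2 := by ring
      rw [this, Nat.mul_div_cancel _ (by norm_num)]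
    rw [h2]
    convert hmu using 2
    ext w
    simp
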